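/- Let Q ≥ 1 be an integer, η ∈ (0, 1], and let 0 = q_0 ≤ q_1 ≤ ⋯ ≤ q_ℓ ≤ Q be reals such that q_{p−1} ≤ (1 − η)·Q for every p ∈ {1, …, ℓ}. Then Σ_{p=1}^{ℓ} (q_p − q_{p−1})/(Q − q_{p−1}) ≤ 1 + ln(1/η). -/

import Mathlib

lemma aux_log_ineq (x y : ℝ) (hy : 0 < y) (hxy : y ≤ x) :
    (x - y) / x ≤ Real.log x - Real.log y := by
  have hx : 0 < x := lt_of_lt_of_le hy hxy
  have h := Real.log_le_sub_one_of_pos (div_pos hy hx)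
  rw [Real.log_div hy.ne' hx.ne'] at h
  have : (x - y) / x = 1 - y / x := by field_simp
  linarith

lemma tel_sum (f : ℕ → ℝ) : ∀ n, ∑ p ∈ Finset.Icc 1 n, (f (p - 1) - f p) = f 0 - f n
  | 0 => by simp
  | n + 1 => by
    rw [Finset.sum_Icc_succ_top (Nat.le_add_left 1 n), tel_sum f n]
    simp

/-- for an integer `Q ≥ 1`, `η ∈ (0,1]`, and reals
`0 = q_0 ≤ q_1 ≤ ⋯ ≤ q_ℓ ≤ Q` with `q_{p−1} ≤ (1−η)·Q` for all `p ∈ {1,…,ℓ}`,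
the relative-gain sum `Σ_{p=1}^ℓ (q_p − q_{p−1})/(Q − q_{p−1})` is at most `1 + ln(1/η)`. -/
theorem relative_gain_log_bound
    (Q : ℕ) (hQ : 1 ≤ Q) (η : ℝ) (hη0 : 0 < η) (hη1 : η ≤ 1)
    (ℓ : ℕ) (q : ℕ → ℝ)
    (hq0 : q 0 = 0)
    (hmono : ∀ p, p < ℓ → q p ≤ q (p + 1))
    (hqℓ : q ℓ ≤ (Q : ℝ))
    (hlt : ∀ p, 1 ≤ p → p ≤ ℓ → q (p - 1) ≤ (1 - η) * (Q : ℝ)) :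
    ∑ p ∈ Finset.Icc 1 ℓ, (q p - q (p - 1)) / ((Q : ℝ) - q (p - 1)) ≤
      1 + Real.log (1 / η) := by
  have hQ0 : (0:ℝ) < (Q:ℝ) := by exact_mod_cast hQ
  have hlog0 : 0 ≤ Real.log (1 / η) :=
    Real.log_nonneg (by rw [le_div_iff₀ hη0]; linarith)
  rcases Nat.eq_zero_or_pos ℓ with h0 | hℓ
  · rw [h0, Finset.Icc_eq_empty (by omega), Finset.sum_empty]; linarith
  -- ℓ ≥ 1
  obtain ⟨m, rfl⟩ : ∃ m, ℓ = m + 1 := ⟨ℓ - 1, (Nat.succ_pred_eq_of_pos hℓ).symm⟩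
  set f : ℕ → ℝ := fun p => Real.log ((Q:ℝ) - q p) with hf
  have hden : ∀ p, 1 ≤ p → p ≤ m + 1 → η * Q ≤ (Q:ℝ) - q (p - 1) := by
    intro p h1 h2
    have := hlt p h1 h2
    nlinarith
  have hηQ : (0:ℝ) < η * Q := mul_pos hη0 hQ0
  rw [Finset.sum_Icc_succ_top (Nat.le_add_left 1 m)]
  have hmid : ∀ p ∈ Finset.Icc 1 m,
      (q p - q (p - 1)) / ((Q:ℝ) - q (p - 1)) ≤ f (p - 1) - f p := by
    intro p hp
    simp only [Finset.mem_Icc] at hp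
    have h1 : η * Q ≤ (Q:ℝ) - q (p - 1) := hden p hp.1 (by omega)
    have h2 : η * Q ≤ (Q:ℝ) - q p := by
      have := hden (p + 1) (by omega) (by omega)
      simpa using this
    have hstep : q (p - 1) ≤ q p := by
      have := hmono (p - 1) (by omega)
      rwa [Nat.sub_add_cancel hp.1] at this
    have := aux_log_ineq ((Q:ℝ) - q (p - 1)) ((Q:ℝ) - q p)
      (lt_of_lt_of_le hηQ h2) (by linarith)
    have hnum : (Q:ℝ) - q (p-1) - ((Q:ℝ) - q p) = q p - q (p-1) := by ring
    rw [hnum] at this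
    exact this
  have htel : ∑ p ∈ Finset.Icc 1 m, (f (p - 1) - f p) = f 0 - f m :=
    tel_sum f m
  have hlast : (q (m + 1) - q (m + 1 - 1)) / ((Q:ℝ) - q (m + 1 - 1)) ≤ 1 := by
    have h1 : η * Q ≤ (Q:ℝ) - q (m + 1 - 1) := hden (m + 1) (by omega) le_rfl
    rw [div_le_one (lt_of_lt_of_le hηQ h1)]
    simp only [Nat.add_sub_cancel]
    linarith
  have hsum : ∑ p ∈ Finset.Icc 1 m, (q p - q (p - 1)) / ((Q:ℝ) - q (p - 1)) ≤
      f 0 - f m := htel ▸ Finset.sum_le_sum hmid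
  have hf0 : f 0 = Real.log Q := by simp [hf, hq0]
  have hfm : Real.log (η * Q) ≤ f m := by
    apply Real.log_le_log hηQ
    have := hden (m + 1) (by omega) le_rfl
    simpa using this
  have hlogdiff : Real.log (Q:ℝ) - Real.log (η * Q) = Real.log (1 / η) := by
    rw [← Real.log_div hQ0.ne' hηQ.ne']
    congr 1
    field_simp
  linarith
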